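/- Let X = (X^{(1)},…,X^{(p)}) be a random vector and Y a square-integrable real random variable with Var[Y] > 0. If, for some j ∈ {1,…,p}, the coordinate X^{(j)} is independent of the pair (X^{(−j)}, Y), where X^{(−j)} = (X^{(k)})_{k≠j}, then its Shapley effect is null: Sh*(X^{(j)}) = 0. -/

import Mathlib

open MeasureTheory ProbabilityTheory

/-- The σ-algebra generated by the subvector `X^{(U)} = (X^{(j)})_{j∈U}` of `X`. -/
def subSigma {Ω : Type*} [MeasurableSpace Ω] {p : ℕ} (X : Ω → Fin p → ℝ)
    (U : Finset (Fin p)) : MeasurableSpace Ω :=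
  MeasurableSpace.comap (fun ω => fun j : U => X ω j) inferInstance

/-- The Shapley effect of the `j`-th input variable:
`Sh*(X^{(j)}) = Σ_{U ⊆ {1,…,p}\{j}} (1/p) · C(p−1,|U|)⁻¹ ·
  (Var[E[Y | X^{(U∪{j})}]] − Var[E[Y | X^{(U)}]]) / Var[Y]`. -/
noncomputable def shapleyEffect {Ω : Type*} [MeasurableSpace Ω] (μ : Measure Ω)
    {p : ℕ} (X : Ω → Fin p → ℝ) (Y : Ω → ℝ) (j : Fin p) : ℝ :=
  ∑ U ∈ (Finset.univ.erase j).powerset,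
    (1 / p : ℝ) * ((p - 1).choose U.card : ℝ)⁻¹ *
      ((variance (μ[Y | subSigma X (insert j U)]) μ
        - variance (μ[Y | subSigma X U]) μ) / variance Y μ)

/-! ### Auxiliary lemmas -/

set_option maxHeartbeats 1000000

lemma variance_congr_ae {Ω : Type*} {_m : MeasurableSpace Ω} {μ : Measure Ω} {f g : Ω → ℝ}
    (h : f =ᵐ[μ] g) : variance f μ = variance g μ := by
  have hint : μ[f] = μ[g] := integral_congr_ae h
  unfold ProbabilityTheory.variance ProbabilityTheory.evariance
  rw [hint]
  congr 1
  refine lintegral_congr_ae ?_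
  filter_upwards [h] with ω hω
  rw [hω]

lemma indep_mono_right {Ω : Type*} {m₁ m₂ m₂' : MeasurableSpace Ω} {m0 : MeasurableSpace Ω}
    {μ : Measure Ω} (h : Indep m₁ m₂ μ) (hle : m₂' ≤ m₂) : Indep m₁ m₂' μ := by
  rw [Indep_iff] at h ⊢
  exact fun t1 t2 h1 h2 => h t1 t2 h1 (hle _ h2)

/-- `subSigma X U` as a supremum of the σ-algebras generated by each coordinate. -/
lemma subSigma_eq_iSup {Ω : Type*} [MeasurableSpace Ω] {p : ℕ} (X : Ω → Fin p → ℝ)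
    (U : Finset (Fin p)) :
    subSigma X U = ⨆ k ∈ U, MeasurableSpace.comap (fun ω => X ω k) inferInstance := by
  rw [subSigma]
  have hpi : (inferInstance : MeasurableSpace ({x // x ∈ U} → ℝ)) =
      ⨆ a : {x // x ∈ U}, MeasurableSpace.comap (fun b => b a) inferInstance := rfl
  rw [hpi, MeasurableSpace.comap_iSup]
  simp_rw [MeasurableSpace.comap_comp, Function.comp_def]
  rw [iSup_subtype]

lemma subSigma_insert {Ω : Type*} [MeasurableSpace Ω] {p : ℕ} (X : Ω → Fin p → ℝ)
    (U : Finset (Fin p)) (j : Fin p) :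
    subSigma X (insert j U) =
      subSigma X U ⊔ MeasurableSpace.comap (fun ω => X ω j) inferInstance := by
  rw [subSigma_eq_iSup, subSigma_eq_iSup, Finset.iSup_insert, sup_comm]

lemma subSigma_le {Ω : Type*} [MeasurableSpace Ω] {p : ℕ} {X : Ω → Fin p → ℝ}
    (hX : Measurable X) (U : Finset (Fin p)) :
    subSigma X U ≤ ‹MeasurableSpace Ω› := by
  rw [subSigma_eq_iSup]
  refine iSup₂_le fun k _ => ?_
  exact measurable_iff_comap_le.mp ((measurable_pi_apply k).comp hX)

/-- Integral of an integrable function over `t₁ ∩ t₂` factorizes when `t₂` lies in a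
σ-algebra independent of one making both `t₁` and `f` measurable. -/
lemma indep_setIntegral_inter {Ω : Type*} {m₁ m₂ mf : MeasurableSpace Ω}
    {m0 : MeasurableSpace Ω} {μ : Measure Ω} [IsProbabilityMeasure μ]
    (hm₁ : m₁ ≤ m0) (hm₂ : m₂ ≤ m0) (hm₁f : m₁ ≤ mf)
    {f : Ω → ℝ} (hfint : Integrable f μ) (hfm : Measurable[mf] f)
    (hind : Indep m₂ mf μ) {t₁ t₂ : Set Ω}
    (ht₁ : MeasurableSet[m₁] t₁) (ht₂ : MeasurableSet[m₂] t₂) :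
    ∫ x in t₁ ∩ t₂, f x ∂μ = (μ t₂).toReal * ∫ x in t₁, f x ∂μ := by
  have ht₁0 : MeasurableSet[m0] t₁ := hm₁ _ ht₁
  have ht₂0 : MeasurableSet[m0] t₂ := hm₂ _ ht₂
  have hif : IndepFun (t₂.indicator (fun _ => (1 : ℝ))) (t₁.indicator f) μ := by
    rw [IndepFun_iff_Indep]
    rw [Indep_iff] at hind ⊢
    intro s1 s2 hs1 hs2
    refine hind s1 s2 ?_ ?_
    · exact measurable_iff_comap_le.mp (measurable_const.indicator ht₂) _ hs1
    · exact measurable_iff_comap_le.mp (hfm.indicator (hm₁f _ ht₁)) _ hs2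
  have hmul := IndepFun.integral_mul_eq_mul_integral hif
    ((integrable_const (1 : ℝ)).indicator ht₂0).aestronglyMeasurable (hfint.indicator ht₁0).aestronglyMeasurable
  have hprod : t₂.indicator (fun _ => (1 : ℝ)) * t₁.indicator f
      = (t₁ ∩ t₂).indicator f := by
    funext ω
    by_cases h1 : ω ∈ t₁ <;> by_cases h2 : ω ∈ t₂ <;>
      simp [Set.indicator_apply, h1, h2]
  rw [hprod] at hmul
  calc ∫ x in t₁ ∩ t₂, f x ∂μ
      = ∫ x, ((t₁ ∩ t₂).indicator f) x ∂μ := (integral_indicator (ht₁0.inter ht₂0)).symm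
    _ = (∫ x, t₂.indicator (fun _ => (1 : ℝ)) x ∂μ) * ∫ x, t₁.indicator f x ∂μ := hmul
    _ = (μ t₂).toReal * ∫ x in t₁, f x ∂μ := by
        rw [integral_indicator ht₂0, integral_indicator ht₁0]
        simp
        exact Or.inl rfl

/-- The main measure-theoretic lemma: if `m₂` is independent of `m₁ ⊔ σ(Y)`, then
conditioning on `m₁ ⊔ m₂` is the same as conditioning on `m₁`. -/
lemma condexp_sup_indep {Ω : Type*} {m₁ m₂ : MeasurableSpace Ω}
    {m0 : MeasurableSpace Ω} (μ : Measure Ω) [IsProbabilityMeasure μ]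
    (hm₁ : m₁ ≤ m0) (hm₂ : m₂ ≤ m0) {Y : Ω → ℝ} (hYint : Integrable Y μ)
    (hindep : Indep m₂ (m₁ ⊔ MeasurableSpace.comap Y inferInstance) μ) :
    μ[Y | m₁ ⊔ m₂] =ᵐ[μ] μ[Y | m₁] := by
  have hm : m₁ ⊔ m₂ ≤ m0 := sup_le hm₁ hm₂
  have hg_int : Integrable (μ[Y | m₁]) μ := integrable_condExp
  have hg_sm : StronglyMeasurable[m₁] (μ[Y | m₁]) := stronglyMeasurable_condExp
  have h_eq : ∀ s, MeasurableSet[m₁ ⊔ m₂] s →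
      ∫ x in s, (μ[Y | m₁]) x ∂μ = ∫ x in s, Y x ∂μ := by
    set π : Set (Set Ω) :=
      {t | ∃ t₁ t₂, MeasurableSet[m₁] t₁ ∧ MeasurableSet[m₂] t₂ ∧ t = t₁ ∩ t₂} with hπ
    have hgen : m₁ ⊔ m₂ = MeasurableSpace.generateFrom π := by
      refine le_antisymm (sup_le ?_ ?_) (MeasurableSpace.generateFrom_le ?_)
      · intro t ht
        exact MeasurableSpace.measurableSet_generateFrom
          ⟨t, Set.univ, ht, MeasurableSet.univ, (Set.inter_univ t).symm⟩
      · intro t ht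
        exact MeasurableSpace.measurableSet_generateFrom
          ⟨Set.univ, t, MeasurableSet.univ, ht, (Set.univ_inter t).symm⟩
      · rintro t ⟨t₁, t₂, h₁, h₂, rfl⟩
        exact ((le_sup_left : m₁ ≤ m₁ ⊔ m₂) _ h₁).inter ((le_sup_right : m₂ ≤ m₁ ⊔ m₂) _ h₂)
    have hpi : IsPiSystem π := by
      rintro s ⟨s₁, s₂, hs₁, hs₂, rfl⟩ t ⟨t₁, t₂, ht₁, ht₂, rfl⟩ -
      exact ⟨s₁ ∩ t₁, s₂ ∩ t₂, hs₁.inter ht₁, hs₂.inter ht₂, by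
        rw [Set.inter_inter_inter_comm]⟩
    refine fun s hs => @MeasurableSpace.induction_on_inter Ω (m₁ ⊔ m₂)
      (fun t _ => ∫ x in t, (μ[Y | m₁]) x ∂μ = ∫ x in t, Y x ∂μ) π hgen hpi ?_ ?_ ?_ ?_ s hs
    · simp
    · rintro t ⟨t₁, t₂, ht₁, ht₂, rfl⟩
      have hYm : Measurable[m₁ ⊔ MeasurableSpace.comap Y inferInstance] Y :=
        Measurable.mono (Measurable.of_comap_le le_rfl) le_sup_right le_rfl
      have e1 : ∫ x in t₁ ∩ t₂, (μ[Y | m₁]) x ∂μ = (μ t₂).toReal * ∫ x in t₁, (μ[Y | m₁]) x ∂μ :=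
        indep_setIntegral_inter hm₁ hm₂ le_rfl hg_int hg_sm.measurable
          (indep_mono_right hindep le_sup_left) ht₁ ht₂
      have e2 : ∫ x in t₁ ∩ t₂, Y x ∂μ = (μ t₂).toReal * ∫ x in t₁, Y x ∂μ :=
        indep_setIntegral_inter hm₁ hm₂ le_sup_left hYint hYm hindep ht₁ ht₂
      rw [e1, e2, setIntegral_condExp hm₁ hYint ht₁]
    · intro t ht hC
      have h1 := integral_add_compl (hm _ ht) hg_int
      have h2 := integral_add_compl (hm _ ht) hYint
      have h3 : ∫ x, (μ[Y | m₁]) x ∂μ = ∫ x, Y x ∂μ := integral_condExp hm₁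
      linarith
    · intro f hdisj hmeas hC
      rw [integral_iUnion (fun i => hm _ (hmeas i)) hdisj hg_int.integrableOn,
          integral_iUnion (fun i => hm _ (hmeas i)) hdisj hYint.integrableOn]
      exact tsum_congr hC
  exact (ae_eq_condExp_of_forall_setIntegral_eq hm hYint
    (fun s _ _ => hg_int.integrableOn) (fun s hs _ => h_eq s hs)
    (hg_sm.mono (le_sup_left : m₁ ≤ m₁ ⊔ m₂)).aestronglyMeasurable (μ := μ)).symm

/-- Null player property of Shapley effects: if `X^{(j)}` is independent of the pair
`(X^{(−j)}, Y)`, where `X^{(−j)} = (X^{(k)})_{k≠j}`, then `Sh*(X^{(j)}) = 0`. -/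
theorem shapleyEffect_null {Ω : Type*} [MeasurableSpace Ω]
    (μ : Measure Ω) [IsProbabilityMeasure μ] (p : ℕ)
    (X : Ω → Fin p → ℝ) (hX : Measurable X)
    (Y : Ω → ℝ) (hY : MemLp Y 2 μ) (hVarY : 0 < variance Y μ)
    (j : Fin p)
    (hindep : IndepFun (fun ω => X ω j)
      (fun ω => ((fun k : {k : Fin p // k ≠ j} => X ω k), Y ω)) μ) :
    shapleyEffect μ X Y j = 0 := by
  classical
  have hYint : Integrable Y μ := hY.integrable one_le_two
  set W : Ω → {k : Fin p // k ≠ j} → ℝ := fun ω => fun k : {k : Fin p // k ≠ j} => X ω k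
    with hW
  set P : Ω → ({k : Fin p // k ≠ j} → ℝ) × ℝ := fun ω => (W ω, Y ω) with hP
  have hmJle : MeasurableSpace.comap (fun ω => X ω j) inferInstance ≤ ‹MeasurableSpace Ω› :=
    measurable_iff_comap_le.mp ((measurable_pi_apply j).comp hX)
  rw [shapleyEffect]
  refine Finset.sum_eq_zero fun U hU => ?_
  rw [Finset.mem_powerset] at hU
  have hm₁ : subSigma X U ≤ ‹MeasurableSpace Ω› := subSigma_le hX U
  -- independence of mJ from σ(X_U) ⊔ σ(Y)
  have hindep2 : Indep (MeasurableSpace.comap (fun ω => X ω j) inferInstance)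
      (subSigma X U ⊔ MeasurableSpace.comap Y inferInstance) μ := by
    have h := (IndepFun_iff_Indep _ _ μ).mp hindep
    refine indep_mono_right h (sup_le ?_ ?_)
    · -- subSigma X U ≤ comap P
      have hUW : subSigma X U ≤ MeasurableSpace.comap W inferInstance := by
        rw [subSigma_eq_iSup]
        refine iSup₂_le fun k hk => ?_
        have hkj : k ≠ j := (Finset.mem_erase.mp (hU hk)).1
        have heq : MeasurableSpace.comap (fun ω => X ω k)
              (inferInstance : MeasurableSpace ℝ)
            = MeasurableSpace.comap W
              (MeasurableSpace.comap (fun v => v ⟨k, hkj⟩) inferInstance) := by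
          rw [MeasurableSpace.comap_comp]
          rfl
        rw [heq]
        exact MeasurableSpace.comap_mono
          (measurable_iff_comap_le.mp (measurable_pi_apply (⟨k, hkj⟩ : {k : Fin p // k ≠ j})))
      refine hUW.trans ?_
      have heq : MeasurableSpace.comap W
            (inferInstance : MeasurableSpace ({k : Fin p // k ≠ j} → ℝ))
          = MeasurableSpace.comap P
            (MeasurableSpace.comap Prod.fst inferInstance) := by
        rw [MeasurableSpace.comap_comp]
        rfl
      rw [heq]
      exact MeasurableSpace.comap_mono (measurable_iff_comap_le.mp measurable_fst)
    · have heq : MeasurableSpace.comap Y (inferInstance : MeasurableSpace ℝ)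
          = MeasurableSpace.comap P
            (MeasurableSpace.comap Prod.snd inferInstance) := by
        rw [MeasurableSpace.comap_comp]
        rfl
      rw [heq]
      exact MeasurableSpace.comap_mono (measurable_iff_comap_le.mp measurable_snd)
  have hkey : μ[Y | subSigma X (insert j U)] =ᵐ[μ] μ[Y | subSigma X U] := by
    rw [subSigma_insert]
    exact condexp_sup_indep μ hm₁ hmJle hYint hindep2
  rw [variance_congr_ae hkey]
  simp
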